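/- Consider the space of 'hairs' H_ℓ(M) = (M^{×ℓ} × [0,1]^ℓ)/∼ where ∼ is generated by: (i) permuting hairs simultaneously with their lengths, (ii) deleting a hair of length 0, (iii) if two hair-points coincide, deleting the hair of shorter length. Then the map Ξ: ⊔_ℓ H_ℓ(M) → ⊔_ℓ H_ℓ(M) that deletes all hairs of length t ≤ 1/2 and rescales each remaining hair of length t > 1/2 to length 2t−1 is well-defined (respects the relations) and continuous, and Ξ is homotopic to the identity through maps that do not increase the number of hairs. -/
import Mathlib


/-- Raw hairy data on a space `M`: an `ℓ`-tuple of points (hair roots) together with hair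
lengths in `[0,1]`. -/
def RawHairs (M : Type*) : Type _ :=
  Σ ℓ : ℕ, (Fin ℓ → M) × (Fin ℓ → ↥(Set.Icc (0 : ℝ) 1))

instance (M : Type*) [TopologicalSpace M] : TopologicalSpace (RawHairs M) :=
  inferInstanceAs (TopologicalSpace (Σ ℓ : ℕ, (Fin ℓ → M) × (Fin ℓ → ↥(Set.Icc (0 : ℝ) 1))))

/-- The relations on raw hairy data: (i) hairs may be permuted simultaneously with their
lengths; (ii) a hair of length `0` is deleted; (iii) if two hair points coincide, the hair
of shorter length is deleted. -/
inductive HairRel (M : Type*) : RawHairs M → RawHairs M → Prop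
  | perm (ℓ : ℕ) (y : Fin ℓ → M) (t : Fin ℓ → ↥(Set.Icc (0 : ℝ) 1)) (σ : Equiv.Perm (Fin ℓ)) :
      HairRel M ⟨ℓ, y, t⟩ ⟨ℓ, y ∘ σ, t ∘ σ⟩
  | zero (ℓ : ℕ) (y : Fin (ℓ + 1) → M) (t : Fin (ℓ + 1) → ↥(Set.Icc (0 : ℝ) 1))
      (i : Fin (ℓ + 1)) (h : (t i : ℝ) = 0) :
      HairRel M ⟨ℓ + 1, y, t⟩ ⟨ℓ, y ∘ i.succAbove, t ∘ i.succAbove⟩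
  | collide (ℓ : ℕ) (y : Fin (ℓ + 1) → M) (t : Fin (ℓ + 1) → ↥(Set.Icc (0 : ℝ) 1))
      (i j : Fin (ℓ + 1)) (hij : i ≠ j) (hy : y i = y j) (ht : (t i : ℝ) ≤ (t j : ℝ)) :
      HairRel M ⟨ℓ + 1, y, t⟩ ⟨ℓ, y ∘ i.succAbove, t ∘ i.succAbove⟩

/-- The space of hairy configurations `⊔_ℓ H_ℓ(M)`, the quotient of the raw hairy data by
the relations above (with the quotient topology). -/
def HairSpace (M : Type*) [TopologicalSpace M] : Type _ := Quot (HairRel M)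

instance (M : Type*) [TopologicalSpace M] : TopologicalSpace (HairSpace M) :=
  inferInstanceAs (TopologicalSpace (Quot (HairRel M)))

/-- The number of hairs of a hairy configuration: the minimal number of hairs among its
representatives. -/
noncomputable def hairCount (M : Type*) [TopologicalSpace M] (x : HairSpace M) : ℕ :=
  sInf {ℓ | ∃ (y : Fin ℓ → M) (t : Fin ℓ → ↥(Set.Icc (0 : ℝ) 1)),
    Quot.mk (HairRel M) ⟨ℓ, y, t⟩ = x}


noncomputable def hairF (s : unitInterval) (t : ↥(Set.Icc (0:ℝ) 1)) : ↥(Set.Icc (0:ℝ) 1) :=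
  Set.projIcc (0:ℝ) 1 (by norm_num) ((2 - (s:ℝ)) * (t:ℝ) - (1 - (s:ℝ)))

lemma continuous_hairF :
    Continuous fun p : unitInterval × ↥(Set.Icc (0:ℝ) 1) => hairF p.1 p.2 := by
  unfold hairF
  exact continuous_projIcc.comp (by continuity)

lemma hairF_mono (s : unitInterval) {a b : ↥(Set.Icc (0:ℝ) 1)} (h : (a:ℝ) ≤ (b:ℝ)) :
    (hairF s a : ℝ) ≤ (hairF s b : ℝ) := by
  have hs := s.2.2
  have : hairF s a ≤ hairF s b :=
    Set.monotone_projIcc (by norm_num : (0:ℝ) ≤ 1)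
      (show (2 - (s:ℝ)) * (a:ℝ) - (1 - (s:ℝ)) ≤ (2 - (s:ℝ)) * (b:ℝ) - (1 - (s:ℝ)) by nlinarith)
  exact this

lemma hairF_zero (s : unitInterval) {a : ↥(Set.Icc (0:ℝ) 1)} (h : (a:ℝ) = 0) :
    (hairF s a : ℝ) = 0 := by
  have hs := s.2.2
  have hle : (2 - (s:ℝ)) * (a:ℝ) - (1 - (s:ℝ)) ≤ 0 := by rw [h]; nlinarith
  rw [hairF, Set.projIcc_of_le_left _ hle]

lemma hairF_one (a : ↥(Set.Icc (0:ℝ) 1)) : hairF 1 a = a := by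
  have : (2 - ((1:unitInterval):ℝ)) * (a:ℝ) - (1 - ((1:unitInterval):ℝ)) = (a:ℝ) := by
    simp; ring
  rw [hairF, this, Set.projIcc_of_mem _ a.2]


noncomputable def hairMapRaw {M : Type*} (s : unitInterval) (x : RawHairs M) : RawHairs M :=
  ⟨x.1, x.2.1, fun i => hairF s (x.2.2 i)⟩

lemma hairMapRaw_wd {M : Type*} [TopologicalSpace M] (s : unitInterval) {a b : RawHairs M}
    (h : HairRel M a b) :
    Quot.mk (HairRel M) (hairMapRaw s a) = Quot.mk (HairRel M) (hairMapRaw s b) := by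
  cases h with
  | perm ℓ y t σ =>
      exact Quot.sound (HairRel.perm ℓ y (fun i => hairF s (t i)) σ)
  | zero ℓ y t i h =>
      exact Quot.sound (HairRel.zero ℓ y (fun i => hairF s (t i)) i (hairF_zero s h))
  | collide ℓ y t i j hij hy ht =>
      exact Quot.sound (HairRel.collide ℓ y (fun i => hairF s (t i)) i j hij hy (hairF_mono s ht))

noncomputable def hairH {M : Type*} [TopologicalSpace M]
    (p : unitInterval × HairSpace M) : HairSpace M :=
  Quot.lift (fun a => Quot.mk (HairRel M) (hairMapRaw p.1 a))
    (fun _ _ h => hairMapRaw_wd p.1 h) p.2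

lemma continuous_hairMapRaw {M : Type*} [TopologicalSpace M] :
    Continuous fun p : unitInterval × RawHairs M => hairMapRaw p.1 p.2 := by
  have key : Continuous fun q : Σ ℓ : ℕ,
      ((Fin ℓ → M) × (Fin ℓ → ↥(Set.Icc (0:ℝ) 1))) × unitInterval =>
      (⟨q.1, q.2.1.1, fun i => hairF q.2.2 (q.2.1.2 i)⟩ : RawHairs M) := by
    apply continuous_sigma
    intro ℓ
    have h2 : Continuous fun q : ((Fin ℓ → M) × (Fin ℓ → ↥(Set.Icc (0:ℝ) 1))) × unitInterval =>
        ((q.1.1, fun i => hairF q.2 (q.1.2 i)) :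
          (Fin ℓ → M) × (Fin ℓ → ↥(Set.Icc (0:ℝ) 1))) := by
      refine Continuous.prodMk (continuous_fst.comp continuous_fst) ?_
      exact continuous_pi fun i => continuous_hairF.comp
        (Continuous.prodMk continuous_snd ((continuous_apply i).comp
          (continuous_snd.comp continuous_fst)))
    exact (continuous_sigmaMk
      (σ := fun ℓ : ℕ => (Fin ℓ → M) × (Fin ℓ → ↥(Set.Icc (0:ℝ) 1))) (i := ℓ)).comp h2
  have : (fun p : unitInterval × RawHairs M => hairMapRaw p.1 p.2) =
      (fun q : Σ ℓ : ℕ,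
        ((Fin ℓ → M) × (Fin ℓ → ↥(Set.Icc (0:ℝ) 1))) × unitInterval =>
        (⟨q.1, q.2.1.1, fun i => hairF q.2.2 (q.2.1.2 i)⟩ : RawHairs M)) ∘
      (Homeomorph.sigmaProdDistrib : RawHairs M × unitInterval ≃ₜ _) ∘ Prod.swap := by
    funext p
    obtain ⟨s, ⟨ℓ, y, t⟩⟩ := p
    rfl
  rw [this]
  exact key.comp ((Homeomorph.sigmaProdDistrib :
    RawHairs M × unitInterval ≃ₜ _).continuous.comp continuous_swap)

lemma continuous_hairH {M : Type*} [TopologicalSpace M] :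
    Continuous (hairH : unitInterval × HairSpace M → HairSpace M) := by
  apply (isQuotientMap_quot_mk (r := HairRel M)).continuous_lift_prod_right
  exact continuous_quot_mk.comp continuous_hairMapRaw

/-- the map `Ξ` that deletes all hairs of length `t ≤ 1/2` and rescales each
remaining hair of length `t > 1/2` to length `2t − 1` is well defined (it respects the
relations), continuous, and homotopic to the identity through maps that do not increase
the number of hairs. -/
theorem statement14 (M : Type*) [TopologicalSpace M] :
    ∃ Xi : C(HairSpace M, HairSpace M),
      (∀ (ℓ : ℕ) (y : Fin ℓ → M) (t : Fin ℓ → ↥(Set.Icc (0 : ℝ) 1)),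
        Xi (Quot.mk (HairRel M) ⟨ℓ, y, t⟩) =
          Quot.mk (HairRel M)
            ⟨ℓ, y, fun i => Set.projIcc (0 : ℝ) 1 (by norm_num) (2 * (t i : ℝ) - 1)⟩) ∧
      ∃ H : Xi.Homotopy (ContinuousMap.id (HairSpace M)),
        ∀ p : unitInterval × HairSpace M, hairCount M (H p) ≤ hairCount M p.2 := by
  classical
  refine ⟨⟨fun x => hairH (0, x),
    continuous_hairH.comp (Continuous.prodMk continuous_const continuous_id)⟩, ?_, ?_⟩
  · intro ℓ y t
    show Quot.mk (HairRel M) (hairMapRaw 0 ⟨ℓ, y, t⟩) = _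
    have : hairMapRaw (0 : unitInterval) (⟨ℓ, y, t⟩ : RawHairs M) =
        ⟨ℓ, y, fun i => Set.projIcc (0 : ℝ) 1 (by norm_num) (2 * (t i : ℝ) - 1)⟩ := by
      simp only [hairMapRaw, hairF]
      congr 1
      congr 1
      funext i
      norm_num
    rw [this]
  · refine ⟨⟨⟨hairH, continuous_hairH⟩, ?_, ?_⟩, ?_⟩
    · intro x; rfl
    · intro x
      induction x using Quot.ind with
      | _ a =>
        show Quot.mk (HairRel M) (hairMapRaw 1 a) = Quot.mk (HairRel M) a
        obtain ⟨ℓ, y, t⟩ := a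
        simp [hairMapRaw, hairF_one]
    · rintro ⟨s, x⟩
      show hairCount M (hairH (s, x)) ≤ hairCount M x
      have hne : {ℓ | ∃ (y : Fin ℓ → M) (t : Fin ℓ → ↥(Set.Icc (0 : ℝ) 1)),
          Quot.mk (HairRel M) ⟨ℓ, y, t⟩ = x}.Nonempty := by
        obtain ⟨⟨ℓ, y, t⟩, rfl⟩ := Quot.exists_rep x
        exact ⟨ℓ, y, t, rfl⟩
      obtain ⟨y, t, hx⟩ := Nat.sInf_mem hne
      apply Nat.sInf_le
      show ∃ y' t', Quot.mk (HairRel M) ⟨hairCount M x, y', t'⟩ = hairH (s, x)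
      refine ⟨y, fun i => hairF s (t i), ?_⟩
      conv_rhs => rw [← hx]
      rfl
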